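/- arXiv:2006.16288 — 2 statements merged into one kernel-verified Lean document; each statement's English description precedes it below -/
import Mathlib

section
/- Let 𝔞 be a finite-dimensional real inner product space carrying a reduced root system Φ with a fixed system of simple roots Δ = {α_1, …, α_n} and Weyl group W. Fix an index i, let λ ∈ 𝔞 and w ∈ W, and suppose that ν := A_w λ satisfies ⟨α_i, ν⟩ = 0 and ⟨α_j, ν⟩ > 0 for all j ≠ i (so ν is dominant and lies on exactly the wall H_{α_i}). Then w ∈ {1, s_i}, and consequently ν = A_{s_i}λ = λ − (⟨α_i, λ⟩/2)·α_i^∨, the orthogonal projection of λ onto the hyperplane H_{α_i}. -/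
open scoped RealInnerProductSpace

namespace ADLV

variable {V : Type*} [NormedAddCommGroup V] [InnerProductSpace ℝ V]

/-- The coroot `α^∨ = 2α/(α,α)` of a root `α`. -/
noncomputable def coroot (α : V) : V := (2 / ⟪α, α⟫) • α

/-- The reflection `s_α : x ↦ x - ⟨α, x⟩ α^∨` in the hyperplane orthogonal to `α`,
as a linear automorphism. -/
noncomputable def sRefl (α : V) (hα : α ≠ 0) : V ≃ₗ[ℝ] V :=
  Module.reflection (f := (innerSL ℝ α : V →ₗ[ℝ] ℝ)) (x := coroot α)
    (by
      have h : ⟪α, α⟫ ≠ 0 := inner_self_ne_zero.mpr hα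
      simp [coroot, real_inner_smul_right]
      field_simp)

/-- The averaging operator `A_w = (1/m)(I + w + w² + ⋯ + w^{m-1})`. -/
noncomputable def avgProj (m : ℕ) (w : V ≃ₗ[ℝ] V) : V →ₗ[ℝ] V :=
  (m : ℝ)⁻¹ • ∑ i ∈ Finset.range m, ((w ^ i : V ≃ₗ[ℝ] V) : V →ₗ[ℝ] V)

/-- The Weyl group: the group generated by the simple reflections `s_1, …, s_n`. -/
noncomputable def weylGroup {n : ℕ} (α : Fin n → V) (hα : ∀ j, α j ≠ 0) :
    Subgroup (V ≃ₗ[ℝ] V) :=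
  Subgroup.closure (Set.range fun j => sRefl (α j) (hα j))

lemma sRefl_apply (α : V) (hα : α ≠ 0) (x : V) :
    sRefl α hα x = x - (⟪α, x⟫ * (2 / ⟪α, α⟫)) • α := by
  rw [sRefl, Module.reflection_apply]
  simp [coroot, smul_smul]

lemma sRefl_self (α : V) (hα : α ≠ 0) : sRefl α hα α = -α := by
  have h : ⟪α, α⟫ ≠ 0 := inner_self_ne_zero.mpr hα
  rw [sRefl_apply]
  have h2 : ⟪α, α⟫ * (2 / ⟪α, α⟫) = 2 := by field_simp
  rw [h2]
  module

lemma sRefl_inner (α : V) (hα : α ≠ 0) (x y : V) :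
    ⟪sRefl α hα x, sRefl α hα y⟫ = ⟪x, y⟫ := by
  have h : ⟪α, α⟫ ≠ 0 := inner_self_ne_zero.mpr hα
  rw [sRefl_apply, sRefl_apply]
  simp only [inner_sub_left, inner_sub_right, real_inner_smul_left, real_inner_smul_right]
  rw [real_inner_comm x α]
  field_simp
  ring

lemma sRefl_sRefl (α : V) (hα : α ≠ 0) (x : V) : sRefl α hα (sRefl α hα x) = x := by
  unfold sRefl
  exact Module.involutive_reflection _ _

lemma sRefl_mul_self (α : V) (hα : α ≠ 0) : sRefl α hα * sRefl α hα = 1 :=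
  LinearEquiv.ext fun x => sRefl_sRefl α hα x


/-- positivity wrt simple system -/
def IsPos {n : ℕ} (α : Fin n → V) (β : V) : Prop :=
  ∃ c : Fin n → ℝ, (∀ j, 0 ≤ c j) ∧ β = ∑ j, c j • α j

variable {n : ℕ} {α : Fin n → V}

lemma coord_eq (hlin : LinearIndependent ℝ α) {c d : Fin n → ℝ}
    (h : ∑ j, c j • α j = ∑ j, d j • α j) : c = d := by
  have h2 : ∑ j, (c j - d j) • α j = 0 := by
    simp [sub_smul, Finset.sum_sub_distrib, h]
  have := Fintype.linearIndependent_iff.mp hlin (fun j => c j - d j) h2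
  funext j
  have h3 : c j - d j = 0 := this j
  linarith

lemma isPos_neg_eq_zero (hlin : LinearIndependent ℝ α) {β : V}
    (h1 : IsPos α β) (h2 : IsPos α (-β)) : β = 0 := by
  obtain ⟨c, hc, rfl⟩ := h1
  obtain ⟨d, hd, hde⟩ := h2
  have h3 : ∑ j, (-(c j)) • α j = ∑ j, d j • α j := by
    rw [← hde]; simp [Finset.sum_neg_distrib]
  have h4 := coord_eq hlin h3
  have hc0 : ∀ j, c j = 0 := by
    intro j
    have := congrFun h4 j
    have := hc j; have := hd j
    simp at *
    linarith
  simp [hc0]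

lemma isPos_simple (j : Fin n) : IsPos α (α j) := by
  refine ⟨fun l => if l = j then 1 else 0, fun l => by positivity, ?_⟩
  simp [ite_smul]

variable {n : ℕ} {α : Fin n → V} {Φ : Finset V}

lemma isPos_total (hsimp : ∀ β ∈ Φ, ∃ c : Fin n → ℤ, ((∀ j, 0 ≤ c j) ∨ (∀ j, c j ≤ 0)) ∧
      β = ∑ j, (c j : ℝ) • α j) {β : V} (hβ : β ∈ Φ) :
    IsPos α β ∨ IsPos α (-β) := by
  obtain ⟨c, hc | hc, hce⟩ := hsimp β hβ
  · exact Or.inl ⟨fun j => (c j : ℝ), fun j => by show (0:ℝ) ≤ (c j : ℝ); exact_mod_cast hc j, hce⟩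
  · refine Or.inr ⟨fun j => (-(c j) : ℝ), fun j => by show (0:ℝ) ≤ (-(c j) : ℝ); simp; exact_mod_cast hc j, ?_⟩
    rw [hce]
    simp [Finset.sum_neg_distrib, neg_smul]

end ADLV
namespace ADLV
variable {V : Type*} [NormedAddCommGroup V] [InnerProductSpace ℝ V]
variable {n : ℕ} {α : Fin n → V} {Φ : Finset V}

lemma sRefl_apply_coroot (β : V) (hβ : β ≠ 0) (x : V) :
    sRefl β hβ x = x - ⟪β, x⟫ • coroot β := by
  rw [sRefl_apply, coroot, smul_smul]

section Main

variable (hα : ∀ j, α j ≠ 0) (hΦ0 : (0:V) ∉ Φ) (hαΦ : ∀ j, α j ∈ Φ)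
  (hlin : LinearIndependent ℝ α)
  (hrefl : ∀ β ∈ Φ, ∀ γ ∈ Φ, γ - ⟪β, γ⟫ • coroot β ∈ Φ)
  (hred : ∀ β ∈ Φ, ∀ r : ℝ, r • β ∈ Φ → r = 1 ∨ r = -1)
  (hsimp : ∀ β ∈ Φ, ∃ c : Fin n → ℤ, ((∀ j, 0 ≤ c j) ∨ (∀ j, c j ≤ 0)) ∧
      β = ∑ j, (c j : ℝ) • α j)

include hα hΦ0 hαΦ hlin hrefl hred hsimp in
lemma sRefl_pos (j : Fin n) {β : V} (hβ : β ∈ Φ) (hpos : IsPos α β) (hne : β ≠ α j) :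
    sRefl (α j) (hα j) β ∈ Φ ∧ IsPos α (sRefl (α j) (hα j) β) ∧
      sRefl (α j) (hα j) β ≠ α j := by
  have hmem : sRefl (α j) (hα j) β ∈ Φ := by
    rw [sRefl_apply_coroot]
    exact hrefl (α j) (hαΦ j) β hβ
  obtain ⟨c, hc, hce⟩ := hpos
  set r : ℝ := ⟪α j, β⟫ * (2 / ⟪α j, α j⟫) with hr
  have hsb : sRefl (α j) (hα j) β = ∑ l, (c l - (if l = j then r else 0)) • α l := by
    rw [sRefl_apply]
    simp only [sub_smul, ite_smul, zero_smul, Finset.sum_sub_distrib]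
    rw [← hce, Finset.sum_ite_eq' Finset.univ j (fun x => r • α x)]
    simp [hr]
  -- some coordinate l ≠ j of β is positive
  have hl : ∃ l, l ≠ j ∧ 0 < c l := by
    by_contra hcon
    push_neg at hcon
    have hc0 : ∀ l, l ≠ j → c l = 0 := fun l hl => le_antisymm (hcon l hl) (hc l)
    have hbj : β = c j • α j := by
      rw [hce, Finset.sum_eq_single j]
      · intro l _ hlj; rw [hc0 l hlj, zero_smul]
      · intro h; exact absurd (Finset.mem_univ j) h
    rcases hred (α j) (hαΦ j) (c j) (by rw [← hbj]; exact hβ) with h1 | h1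
    · exact hne (by rw [hbj, h1, one_smul])
    · have := hc j; rw [h1] at this; linarith
  obtain ⟨l, hlj, hcl⟩ := hl
  have hpos' : IsPos α (sRefl (α j) (hα j) β) := by
    rcases isPos_total hsimp hmem with h | h
    · exact h
    · exfalso
      obtain ⟨d, hd, hde⟩ := h
      have h0 : ∑ m, ((c m - (if m = j then r else 0)) + d m) • α m = ∑ m, (0:ℝ) • α m := by
        simp only [add_smul, Finset.sum_add_distrib, ← hsb, ← hde]
        simp
      have := congrFun (coord_eq hlin h0) l
      simp only [if_neg hlj] at this
      have := hd l
      linarith [congrFun (coord_eq hlin h0) l, hd l]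
  refine ⟨hmem, hpos', ?_⟩
  intro heq
  have hβeq : β = -α j := by
    have := congrArg (sRefl (α j) (hα j)) heq
    rw [sRefl_sRefl, sRefl_self] at this
    exact this
  have : β = 0 := isPos_neg_eq_zero hlin ⟨c, hc, hce⟩ (by rw [hβeq, neg_neg]; exact isPos_simple j)
  rw [this] at hβ
  exact hΦ0 hβ

end Main
end ADLV
namespace ADLV
variable {V : Type*} [NormedAddCommGroup V] [InnerProductSpace ℝ V]

@[simp] lemma mulApply (f g : V ≃ₗ[ℝ] V) (x : V) : (f * g) x = f (g x) := rfl
@[simp] lemma oneApply (x : V) : (1 : V ≃ₗ[ℝ] V) x = x := rfl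

variable {n : ℕ}

noncomputable def sprodW (α : Fin n → V) (hα : ∀ j, α j ≠ 0) (L : List (Fin n)) : V ≃ₗ[ℝ] V :=
  (L.map fun j => sRefl (α j) (hα j)).prod

variable {α : Fin n → V} {hα : ∀ j, α j ≠ 0} {Φ : Finset V}

@[simp] lemma sprodW_nil : sprodW α hα [] = 1 := rfl

lemma sprodW_cons (j : Fin n) (T : List (Fin n)) :
    sprodW α hα (j :: T) = sRefl (α j) (hα j) * sprodW α hα T := by
  simp [sprodW]

lemma sprodW_append (L1 L2 : List (Fin n)) :
    sprodW α hα (L1 ++ L2) = sprodW α hα L1 * sprodW α hα L2 := by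
  simp [sprodW]

lemma sprodW_concat (L : List (Fin n)) (j : Fin n) :
    sprodW α hα (L ++ [j]) = sprodW α hα L * sRefl (α j) (hα j) := by
  simp [sprodW]

lemma sRefl_inv (β : V) (hβ : β ≠ 0) : (sRefl β hβ)⁻¹ = sRefl β hβ :=
  inv_eq_of_mul_eq_one_right (sRefl_mul_self β hβ)

lemma sprodW_inner (L : List (Fin n)) (x y : V) :
    ⟪sprodW α hα L x, sprodW α hα L y⟫ = ⟪x, y⟫ := by
  induction L generalizing x y with
  | nil => simp
  | cons j T ih =>
    rw [sprodW_cons, mulApply, mulApply, sRefl_inner]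
    exact ih x y

lemma sprodW_memΦ (hαΦ : ∀ j, α j ∈ Φ)
    (hrefl : ∀ β ∈ Φ, ∀ γ ∈ Φ, γ - ⟪β, γ⟫ • coroot β ∈ Φ)
    (L : List (Fin n)) {β : V} (hβ : β ∈ Φ) : sprodW α hα L β ∈ Φ := by
  induction L with
  | nil => simpa
  | cons j T ih =>
    rw [sprodW_cons, mulApply, sRefl_apply_coroot]
    exact hrefl (α j) (hαΦ j) _ ih

lemma sprodW_mem_weyl (L : List (Fin n)) : sprodW α hα L ∈ weylGroup α hα := by
  induction L with
  | nil => exact one_mem _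
  | cons j T ih =>
    rw [sprodW_cons]
    exact mul_mem (Subgroup.subset_closure ⟨j, rfl⟩) ih

lemma sprodW_inv (L : List (Fin n)) :
    (sprodW α hα L)⁻¹ = sprodW α hα L.reverse := by
  induction L with
  | nil => simp
  | cons j T ih =>
    rw [sprodW_cons, mul_inv_rev, ih, sRefl_inv, List.reverse_cons, sprodW_concat]

lemma exists_word {w : V ≃ₗ[ℝ] V} (hwW : w ∈ weylGroup α hα) :
    ∃ L : List (Fin n), w = sprodW α hα L := by
  refine Subgroup.closure_induction ?_ ?_ ?_ ?_ hwW
  · rintro x ⟨j, rfl⟩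
    exact ⟨[j], by simp [sprodW_cons]⟩
  · exact ⟨[], rfl⟩
  · rintro x y _ _ ⟨L1, rfl⟩ ⟨L2, rfl⟩
    exact ⟨L1 ++ L2, (sprodW_append L1 L2).symm⟩
  · rintro x _ ⟨L, rfl⟩
    exact ⟨L.reverse, sprodW_inv L⟩

end ADLV
namespace ADLV
variable {V : Type*} [NormedAddCommGroup V] [InnerProductSpace ℝ V]
variable {n : ℕ} {α : Fin n → V} {hα : ∀ j, α j ≠ 0} {Φ : Finset V}

lemma sRefl_congr {β γ : V} (hβ : β ≠ 0) (hγ : γ ≠ 0) (h : β = γ) :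
    sRefl β hβ = sRefl γ hγ := by subst h; rfl

lemma conj_refl {u : V ≃ₗ[ℝ] V} (hu : ∀ x y, ⟪u x, u y⟫ = ⟪x, y⟫) {β : V} (hβ : β ≠ 0)
    (huβ : u β ≠ 0) : sRefl (u β) huβ * u = u * sRefl β hβ := by
  apply LinearEquiv.ext; intro x
  rw [mulApply, mulApply, sRefl_apply, sRefl_apply, map_sub, map_smul]
  rw [hu β x, hu β β]

section Main2

variable (hα' : ∀ j, α j ≠ 0) (hΦ0 : (0:V) ∉ Φ) (hαΦ : ∀ j, α j ∈ Φ)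
  (hlin : LinearIndependent ℝ α)
  (hrefl : ∀ β ∈ Φ, ∀ γ ∈ Φ, γ - ⟪β, γ⟫ • coroot β ∈ Φ)
  (hred : ∀ β ∈ Φ, ∀ r : ℝ, r • β ∈ Φ → r = 1 ∨ r = -1)
  (hsimp : ∀ β ∈ Φ, ∃ c : Fin n → ℤ, ((∀ j, 0 ≤ c j) ∨ (∀ j, c j ≤ 0)) ∧
      β = ∑ j, (c j : ℝ) • α j)

include hΦ0 hαΦ hlin hrefl hred hsimp in
lemma exch : ∀ (L : List (Fin n)) (j : Fin n),
    IsPos α (-(sprodW α hα L (α j))) →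
    ∃ L' : List (Fin n), L'.length + 1 = L.length ∧
      sprodW α hα L * sRefl (α j) (hα j) = sprodW α hα L' := by
  intro L
  induction L with
  | nil =>
    intro j h
    exfalso
    exact hα j (isPos_neg_eq_zero hlin (isPos_simple j) (by simpa using h))
  | cons j₁ T ih =>
    intro j h
    rw [sprodW_cons, mulApply] at h
    by_cases hc : IsPos α (-(sprodW α hα T (α j)))
    · obtain ⟨T', hT1, hT2⟩ := ih j hc
      refine ⟨j₁ :: T', by simp [← hT1], ?_⟩
      rw [sprodW_cons, mul_assoc, hT2, sprodW_cons]
    · have hmem : sprodW α hα T (α j) ∈ Φ := sprodW_memΦ hαΦ hrefl T (hαΦ j)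
      have hpos : IsPos α (sprodW α hα T (α j)) := (isPos_total hsimp hmem).resolve_right hc
      have heq : sprodW α hα T (α j) = α j₁ := by
        by_contra hne
        have h5 := sRefl_pos hα hΦ0 hαΦ hlin hrefl hred hsimp j₁ hmem hpos hne
        have h6 := isPos_neg_eq_zero hlin h5.2.1 h
        rw [h6] at h5
        exact hΦ0 h5.1
      have hconj : sRefl (α j₁) (hα j₁) * sprodW α hα T =
          sprodW α hα T * sRefl (α j) (hα j) := by
        have h1 := conj_refl (u := sprodW α hα T) (sprodW_inner T) (hα j)
          (by rw [heq]; exact hα j₁)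
        rwa [sRefl_congr _ (hα j₁) heq] at h1
      refine ⟨T, rfl, ?_⟩
      rw [sprodW_cons, mul_assoc, ← hconj, ← mul_assoc, sRefl_mul_self, one_mul]

include hΦ0 hαΦ hlin hrefl hred hsimp in
lemma exists_neg_simple : ∀ (k : ℕ) (L : List (Fin n)), L.length ≤ k →
    sprodW α hα L ≠ 1 → ∃ j, IsPos α (-(sprodW α hα L (α j))) := by
  intro k
  induction k with
  | zero =>
    intro L hL h1
    rw [List.length_eq_zero_iff.mp (Nat.le_zero.mp hL)] at h1
    simp at h1
  | succ k ih =>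
    intro L hL h1
    rcases List.eq_nil_or_concat L with rfl | ⟨L₀, j, rfl⟩
    · simp at h1
    · rw [List.concat_eq_append] at *
      have hw : sprodW α hα (L₀ ++ [j]) = sprodW α hα L₀ * sRefl (α j) (hα j) :=
        sprodW_concat L₀ j
      have humem : sprodW α hα L₀ (α j) ∈ Φ := sprodW_memΦ hαΦ hrefl L₀ (hαΦ j)
      rcases isPos_total hsimp humem with hp | hp
      · refine ⟨j, ?_⟩
        rw [hw, mulApply, sRefl_self, map_neg, neg_neg]
        exact hp
      · obtain ⟨L', hlen, hLe⟩ := exch hΦ0 hαΦ hlin hrefl hred hsimp L₀ j hp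
        have hee : sprodW α hα (L₀ ++ [j]) = sprodW α hα L' := by rw [hw, hLe]
        rw [hee] at h1 ⊢
        apply ih L' _ h1
        have h7 : (L₀ ++ [j]).length = L₀.length + 1 := by simp
        omega
end Main2
end ADLV
namespace ADLV
variable {V : Type*} [NormedAddCommGroup V] [InnerProductSpace ℝ V]
variable {n : ℕ} {α : Fin n → V} {hα : ∀ j, α j ≠ 0} {Φ : Finset V}

section Main3
variable (hΦ0 : (0:V) ∉ Φ) (hαΦ : ∀ j, α j ∈ Φ)
  (hlin : LinearIndependent ℝ α)
  (hrefl : ∀ β ∈ Φ, ∀ γ ∈ Φ, γ - ⟪β, γ⟫ • coroot β ∈ Φ)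
  (hred : ∀ β ∈ Φ, ∀ r : ℝ, r • β ∈ Φ → r = 1 ∨ r = -1)
  (hsimp : ∀ β ∈ Φ, ∃ c : Fin n → ℤ, ((∀ j, 0 ≤ c j) ∨ (∀ j, c j ≤ 0)) ∧
      β = ∑ j, (c j : ℝ) • α j)

include hΦ0 hαΦ hlin hrefl hred hsimp in
lemma stab (i : Fin n) (ν : V) (hwall : ⟪α i, ν⟫ = 0) (hpos : ∀ j, j ≠ i → 0 < ⟪α j, ν⟫) :
    ∀ (k : ℕ) (L : List (Fin n)), L.length ≤ k → sprodW α hα L ν = ν →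
    sprodW α hα L = 1 ∨ sprodW α hα L = sRefl (α i) (hα i) := by
  intro k
  induction k with
  | zero =>
    intro L hL _
    rw [List.length_eq_zero_iff.mp (Nat.le_zero.mp hL)]
    exact Or.inl rfl
  | succ k ih =>
    intro L hL hfix
    by_cases h1 : sprodW α hα L = 1
    · exact Or.inl h1
    obtain ⟨j, hj⟩ := exists_neg_simple hΦ0 hαΦ hlin hrefl hred hsimp L.length L le_rfl h1
    have hdom : ∀ l, 0 ≤ ⟪α l, ν⟫ := by
      intro l
      by_cases hl : l = i
      · rw [hl, hwall]
      · exact le_of_lt (hpos l hl)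
    have hip : ⟪α j, ν⟫ = ⟪sprodW α hα L (α j), ν⟫ := by
      conv_rhs => rw [← hfix]
      rw [sprodW_inner]
    have hneg : ⟪sprodW α hα L (α j), ν⟫ ≤ 0 := by
      obtain ⟨d, hd, hde⟩ := hj
      have he2 : sprodW α hα L (α j) = -∑ l, d l • α l := by
        rw [← hde, neg_neg]
      rw [he2, inner_neg_left, neg_nonpos]
      rw [sum_inner]
      apply Finset.sum_nonneg
      intro l _
      rw [real_inner_smul_left]
      exact mul_nonneg (hd l) (hdom l)
    have hji : j = i := by
      by_contra hne
      have := hpos j hne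
      rw [hip] at this
      linarith
    subst hji
    obtain ⟨L', hlen, hLe⟩ := exch hΦ0 hαΦ hlin hrefl hred hsimp L j hj
    have hfix' : sprodW α hα L' ν = ν := by
      rw [← hLe, mulApply, sRefl_apply_coroot, hwall]
      simp [hfix]
    rcases ih L' (by omega) hfix' with h | h
    · right
      have : sprodW α hα L * sRefl (α j) (hα j) * sRefl (α j) (hα j) =
          1 * sRefl (α j) (hα j) := by rw [hLe, h, one_mul]
      rwa [mul_assoc, sRefl_mul_self, mul_one, one_mul] at this
    · left
      have : sprodW α hα L * sRefl (α j) (hα j) * sRefl (α j) (hα j) =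
          sRefl (α j) (hα j) * sRefl (α j) (hα j) := by rw [hLe, h]
      rwa [mul_assoc, sRefl_mul_self, mul_one] at this

end Main3
end ADLV
namespace ADLV
variable {V : Type*} [NormedAddCommGroup V] [InnerProductSpace ℝ V]

lemma avg_fixed (w : V ≃ₗ[ℝ] V) (m : ℕ) (hord : orderOf w = m) (lam : V) :
    w (avgProj m w lam) = avgProj m w lam := by
  have hpow : w ^ m = 1 := by rw [← hord]; exact pow_orderOf_eq_one w
  have hexp : avgProj m w lam = (m:ℝ)⁻¹ • ∑ t ∈ Finset.range m, (w ^ t) lam := by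
    simp [avgProj, LinearMap.sum_apply]
  rw [hexp, map_smul, map_sum]
  congr 1
  have hterm : ∀ t, w ((w ^ t) lam) = (w ^ (t+1)) lam := by
    intro t
    rw [pow_succ']
    rfl
  simp only [hterm]
  have h2 := (Finset.sum_range_succ' (fun t => (w ^ t) lam) m).symm.trans
    (Finset.sum_range_succ (fun t => (w ^ t) lam) m)
  simp only [pow_zero, hpow, oneApply] at h2
  exact add_right_cancel h2

lemma avgProj_one_one (lam : V) : avgProj 1 (1 : V ≃ₗ[ℝ] V) lam = lam := by
  simp [avgProj]

lemma avgProj_two_apply (s : V ≃ₗ[ℝ] V) (lam : V) :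
    avgProj 2 s lam = (2:ℝ)⁻¹ • (lam + s lam) := by
  simp [avgProj, Finset.sum_range_succ, pow_one]


/-- Let `Φ` be a reduced crystallographic root system in a
finite-dimensional real inner product space `𝔞`, with simple roots `α_1, …, α_n` and
Weyl group `W`.  Fix an index `i`, let `λ ∈ 𝔞` and `w ∈ W`, and suppose `ν := A_w λ`
satisfies `⟨α_i, ν⟩ = 0` and `⟨α_j, ν⟩ > 0` for all `j ≠ i`.  Then `w ∈ {1, s_i}`, and
consequently `ν = A_{s_i} λ = λ - (⟨α_i, λ⟩/2) • α_i^∨`, the orthogonal projection of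
`λ` onto the hyperplane `H_{α_i}`. -/
theorem newton_point_rank_one
    [FiniteDimensional ℝ V] {n : ℕ}
    (Φ : Finset V) (α : Fin n → V) (hα : ∀ j, α j ≠ 0)
    (hΦ0 : (0 : V) ∉ Φ)
    (hαΦ : ∀ j, α j ∈ Φ)
    (hlin : LinearIndependent ℝ α)
    -- `Φ` is stable under the reflection in each of its members
    (hrefl : ∀ β ∈ Φ, ∀ γ ∈ Φ, γ - ⟪β, γ⟫ • coroot β ∈ Φ)
    -- `Φ` is crystallographic: all Cartan integers `⟨β, γ^∨⟩` are integers
    (hcrys : ∀ β ∈ Φ, ∀ γ ∈ Φ, ∃ m : ℤ, ⟪β, coroot γ⟫ = (m : ℝ))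
    -- `Φ` is reduced
    (hred : ∀ β ∈ Φ, ∀ r : ℝ, r • β ∈ Φ → r = 1 ∨ r = -1)
    -- `α` is a system of simple roots: every root is an integral linear combination of
    -- the simple roots with coefficients all of the same sign
    (hsimp : ∀ β ∈ Φ, ∃ c : Fin n → ℤ, ((∀ j, 0 ≤ c j) ∨ (∀ j, c j ≤ 0)) ∧
        β = ∑ j, (c j : ℝ) • α j)
    (i : Fin n) (lam : V) (w : V ≃ₗ[ℝ] V) (hwW : w ∈ weylGroup α hα)
    (m : ℕ) (hm : 1 ≤ m) (hord : orderOf w = m)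
    (hν_wall : ⟪α i, avgProj m w lam⟫ = 0)
    (hν_pos : ∀ j, j ≠ i → 0 < ⟪α j, avgProj m w lam⟫) :
    (w = 1 ∨ w = sRefl (α i) (hα i)) ∧
    avgProj m w lam = avgProj 2 (sRefl (α i) (hα i)) lam ∧
    avgProj m w lam = lam - (⟪α i, lam⟫ / 2) • coroot (α i) := by
  have hfix : w (avgProj m w lam) = avgProj m w lam := avg_fixed w m hord lam
  obtain ⟨L, rfl⟩ := exists_word hwW
  have hcases := stab hΦ0 hαΦ hlin hrefl hred hsimp i (avgProj m (sprodW α hα L) lam)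
    hν_wall hν_pos L.length L le_rfl hfix
  refine ⟨hcases, ?_⟩
  rcases hcases with h | h
  · -- w = 1
    have hm1 : m = 1 := by rw [← hord, h, orderOf_one]
    subst hm1
    rw [h] at hν_wall ⊢
    rw [avgProj_one_one] at hν_wall ⊢
    have hslam : sRefl (α i) (hα i) lam = lam := by
      rw [sRefl_apply_coroot, hν_wall, zero_smul, sub_zero]
    constructor
    · rw [avgProj_two_apply, hslam]
      module
    · rw [hν_wall, zero_div, zero_smul, sub_zero]
  · -- w = s_i
    have hs2 : sRefl (α i) (hα i) ^ 2 = 1 := by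
      rw [sq]; exact sRefl_mul_self _ _
    have hs1 : sRefl (α i) (hα i) ≠ 1 := by
      intro he
      have h7 := sRefl_self (α i) (hα i)
      rw [he] at h7
      simp only [oneApply] at h7
      have h8 : (2:ℝ) • α i = 0 := by
        rw [two_smul]
        nth_rewrite 1 [h7]
        exact neg_add_cancel _
      rcases smul_eq_zero.mp h8 with h9 | h9
      · norm_num at h9
      · exact hα i h9
    have hm2 : m = 2 := by
      rw [← hord, h]
      exact orderOf_eq_prime hs2 hs1
    subst hm2
    rw [h]
    refine ⟨rfl, ?_⟩
    rw [avgProj_two_apply, sRefl_apply_coroot]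
    module


end ADLV
end

section
/- Keep the hypotheses of the preceding conjugation corollary: Φ a reduced crystallographic root system with simple roots α_1, …, α_n, w₀ ∈ W with w₀² = I and w₀ρ̌ = −ρ̌, λ, η ∈ Q^∨ with ⟨α_i, η⟩ = 1, η − λ ∈ R^∨, and proj_i(λ − 2ρ̌) = proj_i(η); set ζ := ρ̌ + w₀s_i(λ − ρ̌) and let d_i ∈ ℤ satisfy s_i w₀ ζ − η = d_i·α_i^∨. Then ⟨α_i, λ⟩ = 2d_i + 1. Moreover, writing α_{i₁} := −w₀α_i (which is again a root) and μ := d_i·w₀s_iη, one has ⟨α_{i₁}, μ⟩ = d_i. Consequently, if ⟨α_i, λ − 2ρ̌⟩ is a nonnegative odd integer, then ⟨α_i, λ⟩ ≥ 3 and d_i ≥ 1. -/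
open scoped RealInnerProductSpace

namespace ADLV

variable {V : Type*} [NormedAddCommGroup V] [InnerProductSpace ℝ V]

/-- The orthogonal projection `proj_α : x ↦ x - ½⟨α, x⟩ α^∨` of `V` onto the
hyperplane `H_α = {x : ⟨α, x⟩ = 0}`. -/
noncomputable def projH (α : V) (x : V) : V := x - (⟪α, x⟫ / 2) • coroot α

/-- The coroot lattice `R^∨ = ⊕_j ℤ α_j^∨`. -/
noncomputable def corootLattice {n : ℕ} (α : Fin n → V) : AddSubgroup V :=
  AddSubgroup.closure (Set.range fun j => coroot (α j))

/-- The coweight lattice `Q^∨ = {x : ⟨α_j, x⟩ ∈ ℤ for all j}`. -/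
def coweightLattice {n : ℕ} (α : Fin n → V) : Set V :=
  {x : V | ∀ j, ∃ m : ℤ, ⟪α j, x⟫ = (m : ℝ)}

/-- Keep the hypotheses of the conjugation corollary: `w₀ ∈ W` with
`w₀² = I` and `w₀ ρ̌ = -ρ̌`; `λ, η ∈ Q^∨` with `⟨α_i, η⟩ = 1`, `η - λ ∈ R^∨` and
`proj_i (λ - 2ρ̌) = proj_i η`; `ζ := ρ̌ + w₀ s_i (λ - ρ̌)` and `d_i ∈ ℤ` with
`s_i w₀ ζ - η = d_i • α_i^∨`.  Then `⟨α_i, λ⟩ = 2 d_i + 1`.  Moreover, writing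
`α_{i₁} := -w₀ α_i` and `μ := d_i • w₀ s_i η`, one has `⟨α_{i₁}, μ⟩ = d_i`.
Consequently, if `⟨α_i, λ - 2ρ̌⟩` is a nonnegative odd integer, then `⟨α_i, λ⟩ ≥ 3`
and `d_i ≥ 1`. -/
theorem positivity_of_conjugator {n : ℕ}
    (α : Fin n → V) (hα : ∀ j, α j ≠ 0)
    (hlin : LinearIndependent ℝ α)
    -- crystallographic: the Cartan integers `⟨α_k, α_j^∨⟩` are integers
    (hcart : ∀ k j, ∃ m : ℤ, ⟪α k, coroot (α j)⟫ = (m : ℝ))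
    -- `ρ̌` is the half-sum of the positive coroots, so `⟨α_j, ρ̌⟩ = 1` for all `j`
    (ρv : V) (hρ : ∀ j, ⟪α j, ρv⟫ = 1)
    (w₀ : V ≃ₗ[ℝ] V) (hw₀W : w₀ ∈ weylGroup α hα)
    (hw₀2 : w₀ * w₀ = 1) (hw₀ρ : w₀ ρv = -ρv)
    (i : Fin n) (lam η : V)
    (hlam : lam ∈ coweightLattice α) (hη : η ∈ coweightLattice α)
    (hηi : ⟪α i, η⟫ = 1) (hηlam : η - lam ∈ corootLattice α)
    (hproj : projH (α i) (lam - (2 : ℝ) • ρv) = projH (α i) η)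
    (d : ℤ)
    (hd : sRefl (α i) (hα i) (w₀ (ρv + w₀ (sRefl (α i) (hα i) (lam - ρv)))) - η
        = (d : ℝ) • coroot (α i)) :
    ⟪α i, lam⟫ = 2 * (d : ℝ) + 1 ∧
    ⟪-(w₀ (α i)), (d : ℝ) • (w₀ (sRefl (α i) (hα i) η))⟫ = (d : ℝ) ∧
    ((∃ k : ℕ, ⟪α i, lam - (2 : ℝ) • ρv⟫ = 2 * (k : ℝ) + 1) →
      (3 : ℝ) ≤ ⟪α i, lam⟫ ∧ 1 ≤ d) := by
  classical
  set c := coroot (α i) with hc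
  have hN : ⟪α i, α i⟫ ≠ 0 := inner_self_ne_zero.mpr (hα i)
  have hAc : ⟪α i, c⟫ = 2 := by
    rw [hc, coroot, real_inner_smul_right]; field_simp
  have hsgen : ∀ j x, sRefl (α j) (hα j) x = x - ⟪α j, x⟫ • coroot (α j) := by
    intro j x
    rw [sRefl, Module.reflection_apply]
    rfl
  have hs : ∀ x, sRefl (α i) (hα i) x = x - ⟪α i, x⟫ • c := hsgen i
  -- Weyl group elements preserve the inner product
  have hiso : ∀ g ∈ weylGroup α hα, ∀ x y : V, ⟪g x, g y⟫ = ⟪x, y⟫ := by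
    intro g hg
    refine Subgroup.closure_induction ?_ ?_ ?_ ?_ hg
    · rintro g ⟨j, rfl⟩ x y
      have hNj : ⟪α j, α j⟫ ≠ 0 := inner_self_ne_zero.mpr (hα j)
      rw [hsgen j x, hsgen j y]
      simp only [coroot, smul_smul, inner_sub_left, inner_sub_right,
        real_inner_smul_left, real_inner_smul_right]
      rw [real_inner_comm x (α j), real_inner_comm y (α j)]
      field_simp
      ring
    · intro x y; simp
    · intro g h _ _ hgP hhP x y
      have : (g * h) x = g (h x) := rfl
      rw [this, show (g * h) y = g (h y) from rfl, hgP, hhP]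
    · intro g _ hgP x y
      have hx : g (g⁻¹ x) = x :=
        congrArg (fun e : V ≃ₗ[ℝ] V => e x) (mul_inv_cancel g)
      have hy : g (g⁻¹ y) = y :=
        congrArg (fun e : V ≃ₗ[ℝ] V => e y) (mul_inv_cancel g)
      calc ⟪g⁻¹ x, g⁻¹ y⟫ = ⟪g (g⁻¹ x), g (g⁻¹ y)⟫ := (hgP _ _).symm
        _ = ⟪x, y⟫ := by rw [hx, hy]
  have hw2 : ∀ x, w₀ (w₀ x) = x := fun x => by
    have : (w₀ * w₀) x = (1 : V ≃ₗ[ℝ] V) x := by rw [hw₀2]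
    simpa using this
  -- key: lam - 2ρv - η = (d-1) • c
  have key : lam - (2 : ℝ) • ρv - η = ((d : ℝ) - 1) • c := by
    have h1 : sRefl (α i) (hα i) (w₀ (ρv + w₀ (sRefl (α i) (hα i) (lam - ρv))))
        = lam - (2 : ℝ) • ρv + c := by
      rw [hs (lam - ρv), map_add, hw₀ρ, hw2, hs]
      simp only [inner_add_right, inner_neg_right, inner_sub_right,
        real_inner_smul_right, hAc, hρ i]
      module
    rw [h1] at hd
    have : lam - (2 : ℝ) • ρv - η = (d : ℝ) • c - c := by
      rw [← hd]; abel
    rw [this, sub_smul, one_smul]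
  have hinner := congrArg (fun v => ⟪α i, v⟫) key
  simp only [inner_sub_right, inner_smul_right, real_inner_smul_right, hAc, hρ i,
    hηi] at hinner
  have h1 : ⟪α i, lam⟫ = 2 * (d : ℝ) + 1 := by linarith
  refine ⟨h1, ?_, ?_⟩
  · rw [hs η]
    have : ⟪-(w₀ (α i)), (d : ℝ) • w₀ (η - ⟪α i, η⟫ • c)⟫
        = -((d : ℝ) * ⟪w₀ (α i), w₀ (η - ⟪α i, η⟫ • c)⟫) := by
      rw [inner_neg_left, real_inner_smul_right]
    rw [this, hiso w₀ hw₀W]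
    simp only [inner_sub_right, real_inner_smul_right, hηi, hAc]
    ring
  · rintro ⟨k, hk⟩
    simp only [inner_sub_right, real_inner_smul_right, hρ i, h1] at hk
    have hdk : (d : ℝ) = (k : ℝ) + 1 := by linarith
    have hd1 : (1 : ℤ) ≤ d := by
      have : ((1 : ℤ) : ℝ) ≤ (d : ℝ) := by
        have hk0 : (0 : ℝ) ≤ (k : ℝ) := Nat.cast_nonneg k
        rw [hdk]; push_cast; linarith
      exact_mod_cast this
    constructor
    · rw [h1]
      have : (1 : ℝ) ≤ (d : ℝ) := by exact_mod_cast hd1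
      linarith
    · exact hd1


end ADLV
end
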